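/- Let H = L²(π) for a probability measure π, let P be a bounded linear operator on H with PΠ = ΠP = Π and ‖P - Π‖ ≤ λ < 1, where Π h = (∫h dπ)·1 is the rank-one projection onto constants. Define P̂ = λI + (1-λ)Π. Then for all h₁, h₂ ∈ H, |⟨Ph₁, h₂⟩| ≤ ⟨P̂h₁, h₁⟩^{1/2} ⟨P̂h₂, h₂⟩^{1/2}. -/

import Mathlib

open MeasureTheory

section Aux

variable {Ω : Type*} [MeasurableSpace Ω] {π : Measure Ω} [IsProbabilityMeasure π]

lemma aux_int (f : Lp ℝ 2 π) : Integrable (f : Ω → ℝ) π :=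
  (Lp.memLp f).integrable (by norm_num)

lemma aux_inner_Pi (Pi : Lp ℝ 2 π →L[ℝ] Lp ℝ 2 π)
    (hPi : ∀ h : Lp ℝ 2 π, (Pi h : Ω → ℝ) =ᵐ[π] fun _ => ∫ y, h y ∂π)
    (g f : Lp ℝ 2 π) :
    inner (𝕜 := ℝ) (Pi g) f = (∫ y, g y ∂π) * (∫ y, f y ∂π) := by
  rw [MeasureTheory.L2.inner_def]
  have h : (fun x => inner (𝕜 := ℝ) ((Pi g : Ω → ℝ) x) (f x)) =ᵐ[π]
      fun x => (∫ y, g y ∂π) * f x := by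
    filter_upwards [hPi g] with x hx
    simp [hx, RCLike.inner_apply]; ring
  rw [integral_congr_ae h, integral_const_mul]

lemma aux_m_Pi (Pi : Lp ℝ 2 π →L[ℝ] Lp ℝ 2 π)
    (hPi : ∀ h : Lp ℝ 2 π, (Pi h : Ω → ℝ) =ᵐ[π] fun _ => ∫ y, h y ∂π)
    (f : Lp ℝ 2 π) : (∫ y, (Pi f) y ∂π) = ∫ y, f y ∂π := by
  rw [integral_congr_ae (hPi f)]
  simp

lemma aux_cs (lam a b m₁ m₂ : ℝ) (hlam : 0 ≤ lam) (ha : 0 ≤ a) (hb : 0 ≤ b) :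
    lam * a * b + |m₁| * |m₂| ≤
      Real.sqrt (lam * a ^ 2 + m₁ ^ 2) * Real.sqrt (lam * b ^ 2 + m₂ ^ 2) := by
  rw [← Real.sqrt_mul (by positivity)]
  rw [show lam * a * b + |m₁| * |m₂| = Real.sqrt ((lam * a * b + |m₁| * |m₂|) ^ 2) by
    rw [Real.sqrt_sq (by positivity)]]
  apply Real.sqrt_le_sqrt
  have hu : |m₁| ^ 2 = m₁ ^ 2 := sq_abs m₁
  have hv : |m₂| ^ 2 = m₂ ^ 2 := sq_abs m₂
  rw [← hu, ← hv]
  nlinarith [mul_nonneg hlam (sq_nonneg (a * |m₂| - b * |m₁|))]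

end Aux

open MeasureTheory in
theorem stmt_7 {Ω : Type*} [MeasurableSpace Ω] (π : Measure Ω) [IsProbabilityMeasure π]
    (lam : ℝ) (hlam : lam < 1)
    (P Pi : Lp ℝ 2 π →L[ℝ] Lp ℝ 2 π)
    (hPi : ∀ h : Lp ℝ 2 π, (Pi h : Ω → ℝ) =ᵐ[π] fun _ => ∫ y, h y ∂π)
    (hPPi : P.comp Pi = Pi) (hPiP : Pi.comp P = Pi)
    (hgap : ‖P - Pi‖ ≤ lam)
    (h₁ h₂ : Lp ℝ 2 π) :
    |inner (𝕜 := ℝ) (P h₁) h₂| ≤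
      Real.sqrt (inner (𝕜 := ℝ)
        ((lam • ContinuousLinearMap.id ℝ (Lp ℝ 2 π) + (1 - lam) • Pi) h₁) h₁) *
      Real.sqrt (inner (𝕜 := ℝ)
        ((lam • ContinuousLinearMap.id ℝ (Lp ℝ 2 π) + (1 - lam) • Pi) h₂) h₂) := by
  have hlam0 : 0 ≤ lam := le_trans (norm_nonneg _) hgap
  set m : Lp ℝ 2 π → ℝ := fun f => ∫ y, f y ∂π with hm
  have hIP : ∀ g f : Lp ℝ 2 π, inner (𝕜 := ℝ) (Pi g) f = m g * m f :=
    aux_inner_Pi Pi hPi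
  have hmPi : ∀ f : Lp ℝ 2 π, m (Pi f) = m f := aux_m_Pi Pi hPi
  -- m (P f) = m f
  have hmP : ∀ f : Lp ℝ 2 π, m (P f) = m f := by
    intro f
    have : m (Pi (P f)) = m (Pi f) := by
      congr 1
      exact congrFun (congrArg DFunLike.coe hPiP) f
    rwa [hmPi, hmPi] at this
  -- Pi ∘ Pi = Pi pointwise
  have hPiPi : ∀ f : Lp ℝ 2 π, Pi (Pi f) = Pi f := by
    intro f
    apply MeasureTheory.Lp.ext
    filter_upwards [hPi (Pi f), hPi f] with x hx hx'
    rw [hx, hx']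
    exact hmPi f
  -- P (Pi f) = Pi f
  have hPPi' : ∀ f : Lp ℝ 2 π, P (Pi f) = Pi f := fun f =>
    congrFun (congrArg DFunLike.coe hPPi) f
  -- m is additive on subtraction of Lp elements
  have hmsub : ∀ f g : Lp ℝ 2 π, m (f - g) = m f - m g := by
    intro f g
    have : ((f - g : Lp ℝ 2 π) : Ω → ℝ) =ᵐ[π] fun x => f x - g x := Lp.coeFn_sub f g
    rw [hm]
    simp only
    rw [integral_congr_ae this, integral_sub (aux_int f) (aux_int g)]
  set a := ‖h₁ - Pi h₁‖ with hadef
  set b := ‖h₂ - Pi h₂‖ with hbdef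
  -- key RHS computation
  have hRHS : ∀ h : Lp ℝ 2 π, inner (𝕜 := ℝ)
      ((lam • ContinuousLinearMap.id ℝ (Lp ℝ 2 π) + (1 - lam) • Pi) h) h
      = lam * ‖h - Pi h‖ ^ 2 + (m h) ^ 2 := by
    intro h
    have hsplit : inner (𝕜 := ℝ) h h = ‖h - Pi h‖ ^ 2 + (m h) ^ 2 := by
      have h1 : h = (h - Pi h) + Pi h := by abel
      have horth : inner (𝕜 := ℝ) (Pi h) (h - Pi h) = 0 := by
        rw [hIP, hmsub, hmPi]; ring
      have horth' : inner (𝕜 := ℝ) (h - Pi h) (Pi h) = 0 := by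
        rw [real_inner_comm]; exact horth
      have hPiPih : inner (𝕜 := ℝ) (Pi h) (Pi h) = (m h) ^ 2 := by
        rw [hIP, hmPi]; ring
      have key := real_inner_add_add_self (h - Pi h) (Pi h)
      rw [← h1] at key
      rw [key, horth', hPiPih, real_inner_self_eq_norm_sq]; ring
    simp only [ContinuousLinearMap.add_apply, ContinuousLinearMap.smul_apply,
      ContinuousLinearMap.id_apply, inner_add_left, real_inner_smul_left]
    rw [hsplit, hIP]
    ring
  rw [hRHS h₁, hRHS h₂]
  -- LHS decomposition
  have hdec : inner (𝕜 := ℝ) (P h₁) h₂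
      = inner (𝕜 := ℝ) ((P - Pi) (h₁ - Pi h₁)) (h₂ - Pi h₂) + m h₁ * m h₂ := by
    have e1 : (P - Pi) (h₁ - Pi h₁) = P h₁ - Pi h₁ := by
      simp only [ContinuousLinearMap.sub_apply, map_sub, hPPi' h₁, hPiPi h₁]
      abel
    rw [e1, inner_sub_left, inner_sub_right, inner_sub_right]
    have c1 : inner (𝕜 := ℝ) (P h₁) (Pi h₂) = m (P h₁) * m h₂ := by
      rw [real_inner_comm, hIP]; ring
    have c2 : inner (𝕜 := ℝ) (Pi h₁) (Pi h₂) = m h₁ * m h₂ := by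
      rw [hIP, hmPi]
    have c3 : inner (𝕜 := ℝ) (Pi h₁) h₂ = m h₁ * m h₂ := hIP h₁ h₂
    rw [c1, c2, c3, hmP]
    ring
  rw [hdec]
  have hb1 : |inner (𝕜 := ℝ) ((P - Pi) (h₁ - Pi h₁)) (h₂ - Pi h₂)| ≤ lam * a * b := by
    refine le_trans (abs_real_inner_le_norm _ _) ?_
    have : ‖(P - Pi) (h₁ - Pi h₁)‖ ≤ lam * a :=
      le_trans ((P - Pi).le_opNorm _) (mul_le_mul_of_nonneg_right hgap (norm_nonneg _))
    exact mul_le_mul_of_nonneg_right this (norm_nonneg _) |>.trans (le_refl _)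
  calc |inner (𝕜 := ℝ) ((P - Pi) (h₁ - Pi h₁)) (h₂ - Pi h₂) + m h₁ * m h₂|
      ≤ |inner (𝕜 := ℝ) ((P - Pi) (h₁ - Pi h₁)) (h₂ - Pi h₂)| + |m h₁ * m h₂| :=
        abs_add_le _ _
    _ ≤ lam * a * b + |m h₁| * |m h₂| := by rw [abs_mul]; exact add_le_add_left hb1 _
    _ ≤ Real.sqrt (lam * a ^ 2 + (m h₁) ^ 2) * Real.sqrt (lam * b ^ 2 + (m h₂) ^ 2) :=
        aux_cs lam a b (m h₁) (m h₂) hlam0 (norm_nonneg _) (norm_nonneg _)
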